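/- Consider n unit-demand bidders and n items where bidders i = 1,...,n−1 value items i and n at 1−ε each (value of any set is 1−ε if it contains item i or item n, else 0), and bidder n values any nonempty subset of {1,...,n−1} at 1 (and item n at 0). The profile where bidder n bids 1 on items 1,...,n−1 and 0 on item n, and each bidder i < n bids 0 on item i and 1−ε on item n, is a pure Nash equilibrium of the simultaneous second-price auction in which every bidder plays an undominated strategy; its welfare is 2−ε while the optimal welfare is at least (n−1)(1−ε)+1, so the welfare ratio is Ω(n). -/

import Mathlib

open Finset

/-- Valuations: bidders and items are both indexed by `Fin (n+1)`.  Each unit-demand bidder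
`i ≠ n` values any set containing item `i` or item `n` at `1 - ε`; bidder `n` values any set
containing an item other than item `n` at `1`. -/
noncomputable def val (n : ℕ) (ε : ℝ) (i : Fin (n + 1)) (S : Finset (Fin (n + 1))) : ℝ :=
  if i = Fin.last n then (if ∃ j ∈ S, j ≠ Fin.last n then 1 else 0)
  else (if i ∈ S ∨ Fin.last n ∈ S then 1 - ε else 0)

/-- The bid profile: bidder `n` bids `1` on every item other than item `n`; every other bidder
bids `1 - ε` on item `n` and `0` elsewhere. -/
noncomputable def bid (n : ℕ) (ε : ℝ) (i j : Fin (n + 1)) : ℝ :=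
  if i = Fin.last n then (if j = Fin.last n then 0 else 1)
  else (if j = Fin.last n then 1 - ε else 0)

/-- The tie-broken allocation: item `n` goes to bidder `0`; every other item goes to bidder
`n`. -/
def alloc (n : ℕ) (j : Fin (n + 1)) : Fin (n + 1) :=
  if j = Fin.last n then 0 else Fin.last n

/-- The set of items won by bidder `i`. -/
def won (n : ℕ) (i : Fin (n + 1)) : Finset (Fin (n + 1)) :=
  Finset.univ.filter fun j => alloc n j = i

/-- The highest bid on item `j` among bidders other than `i`. -/
noncomputable def maxOther (n : ℕ) (ε : ℝ) (i j : Fin (n + 1)) : ℝ :=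
  (((Finset.univ.erase i).sup fun k => Real.toNNReal (bid n ε k j) : NNReal) : ℝ)

/-- The `Ω(n)` welfare-gap example for second-price simultaneous auctions: the given bid
profile is a pure Nash equilibrium (deviations win the items where they meet the opposing
bids, paying the second price), its welfare is `2 - ε`, while some allocation has welfare
`n·(1-ε) + 1`. -/
theorem stmt16 (n : ℕ) (hn : 2 ≤ n) (ε : ℝ) (hε0 : 0 < ε) (hε1 : ε < 1) :
    (∀ (i : Fin (n + 1)) (c : Fin (n + 1) → ℝ),
      val n ε i (Finset.univ.filter fun j => maxOther n ε i j ≤ c j) -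
          (∑ j ∈ Finset.univ.filter fun j => maxOther n ε i j ≤ c j, maxOther n ε i j) ≤
        val n ε i (won n i) - ∑ j ∈ won n i, maxOther n ε i j) ∧
      (∑ i, val n ε i (won n i)) = 2 - ε ∧
      (∃ O : Fin (n + 1) → Finset (Fin (n + 1)),
        (∀ i k : Fin (n + 1), i ≠ k → Disjoint (O i) (O k)) ∧
        ∑ i, val n ε i (O i) = n * (1 - ε) + 1) := by
  have hε' : (0:ℝ) ≤ 1 - ε := by linarith
  have hv1' : (1 : Fin (n+1)).val = 1 := by
    rw [Fin.val_one']; exact Nat.mod_eq_of_lt (by omega)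
  have h0L : (0 : Fin (n+1)) ≠ Fin.last n :=
    Fin.ne_of_val_ne (by rw [Fin.val_zero, Fin.val_last]; omega)
  have h1L : (1 : Fin (n+1)) ≠ Fin.last n :=
    Fin.ne_of_val_ne (by rw [hv1', Fin.val_last]; omega)
  have h01 : (0 : Fin (n+1)) ≠ 1 :=
    Fin.ne_of_val_ne (by rw [Fin.val_zero, hv1']; omega)
  have hnonneg : ∀ i j : Fin (n+1), 0 ≤ maxOther n ε i j := fun i j => NNReal.coe_nonneg _
  have hval_empty : ∀ i : Fin (n+1), i ≠ Fin.last n →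
      val n ε i (∅ : Finset (Fin (n+1))) = 0 := by
    intro i hi; unfold _root_.val; rw [if_neg hi]; simp
  -- maxOther for i ≠ last on items j ≠ last
  have hmax1 : ∀ i j : Fin (n+1), i ≠ Fin.last n → j ≠ Fin.last n → maxOther n ε i j = 1 := by
    intro i j hi hj
    unfold maxOther
    have h : ((Finset.univ.erase i).sup fun k => Real.toNNReal (bid n ε k j)) = 1 := by
      apply le_antisymm
      · apply Finset.sup_le
        intro k _
        have : bid n ε k j ≤ 1 := by unfold bid; split_ifs <;> linarith
        calc Real.toNNReal (bid n ε k j) ≤ Real.toNNReal 1 := Real.toNNReal_mono this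
          _ = 1 := Real.toNNReal_one
      · have hmem : Fin.last n ∈ Finset.univ.erase i :=
          Finset.mem_erase.mpr ⟨Ne.symm hi, Finset.mem_univ _⟩
        have h1 : Real.toNNReal (bid n ε (Fin.last n) j) = 1 := by
          unfold bid; rw [if_pos rfl, if_neg hj, Real.toNNReal_one]
        calc (1 : NNReal) = Real.toNNReal (bid n ε (Fin.last n) j) := h1.symm
          _ ≤ _ := Finset.le_sup (f := fun k => Real.toNNReal (bid n ε k j)) hmem
    rw [h]; norm_num
  -- maxOther for i ≠ last on the last item
  have hmaxL : ∀ i : Fin (n+1), i ≠ Fin.last n → maxOther n ε i (Fin.last n) = 1 - ε := by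
    intro i hi
    unfold maxOther
    have h : ((Finset.univ.erase i).sup fun k => Real.toNNReal (bid n ε k (Fin.last n)))
        = Real.toNNReal (1 - ε) := by
      apply le_antisymm
      · apply Finset.sup_le
        intro k _
        apply Real.toNNReal_mono
        unfold bid
        split_ifs <;> first | linarith | exact absurd rfl (by assumption)
      · set k : Fin (n+1) := if i = 0 then 1 else 0 with hk
        have hki : k ≠ i := by
          by_cases h : i = 0
          · rw [hk, if_pos h, h]; exact Ne.symm h01
          · rw [hk, if_neg h]; exact Ne.symm h
        have hkL : k ≠ Fin.last n := by
          by_cases h : i = 0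
          · rw [hk, if_pos h]; exact h1L
          · rw [hk, if_neg h]; exact h0L
        have hmem : k ∈ Finset.univ.erase i := Finset.mem_erase.mpr ⟨hki, Finset.mem_univ _⟩
        have h1 : Real.toNNReal (bid n ε k (Fin.last n)) = Real.toNNReal (1 - ε) := by
          unfold bid; rw [if_neg hkL, if_pos rfl]
        calc Real.toNNReal (1 - ε) = Real.toNNReal (bid n ε k (Fin.last n)) := h1.symm
          _ ≤ _ := Finset.le_sup (f := fun k => Real.toNNReal (bid n ε k (Fin.last n))) hmem
    rw [h, Real.coe_toNNReal _ hε']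
  -- maxOther for bidder last
  have hmaxLa : ∀ j : Fin (n+1), j ≠ Fin.last n → maxOther n ε (Fin.last n) j = 0 := by
    intro j hj
    unfold maxOther
    have h : ((Finset.univ.erase (Fin.last n)).sup fun k => Real.toNNReal (bid n ε k j)) = 0 := by
      apply le_antisymm
      · apply Finset.sup_le
        intro k hk
        have hkL : k ≠ Fin.last n := (Finset.mem_erase.mp hk).1
        rw [show bid n ε k j = 0 by unfold bid; rw [if_neg hkL, if_neg hj],
          Real.toNNReal_zero]
      · exact zero_le
    rw [h]; norm_num
  -- won sets
  have hwonL : won n (Fin.last n) = Finset.univ.filter (fun j => j ≠ Fin.last n) := by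
    ext j
    simp only [won, Finset.mem_filter, Finset.mem_univ, true_and]
    unfold alloc
    by_cases h : j = Fin.last n
    · rw [h, if_pos rfl]
      simp [h0L]
    · rw [if_neg h]
      simp [h]
  have hwon0 : won n (0 : Fin (n+1)) = {Fin.last n} := by
    ext j
    simp only [won, Finset.mem_filter, Finset.mem_univ, true_and,
      Finset.mem_singleton]
    unfold alloc
    by_cases h : j = Fin.last n
    · rw [h, if_pos rfl]; simp [h]
    · rw [if_neg h]; simp [h, Ne.symm h0L]
  have hwoni : ∀ i : Fin (n+1), i ≠ 0 → i ≠ Fin.last n → won n i = ∅ := by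
    intro i h0 hL
    ext j
    simp only [won, Finset.mem_filter, Finset.mem_univ, true_and,
      Finset.notMem_empty, iff_false]
    unfold alloc
    by_cases h : j = Fin.last n
    · rw [h, if_pos rfl]; exact Ne.symm h0
    · rw [if_neg h]; exact Ne.symm hL
  -- equilibrium utility of any i ≠ last is 0
  have hRHS : ∀ i : Fin (n+1), i ≠ Fin.last n →
      val n ε i (won n i) - ∑ j ∈ won n i, maxOther n ε i j = 0 := by
    intro i hi
    by_cases h0 : i = 0
    · subst h0
      rw [hwon0, Finset.sum_singleton, hmaxL 0 h0L]
      have h : val n ε 0 {Fin.last n} = 1 - ε := by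
        unfold _root_.val
        rw [if_neg h0L, if_pos (Or.inr (Finset.mem_singleton_self _))]
      rw [h]; ring
    · rw [hwoni i h0 hi, Finset.sum_empty, hval_empty i hi]; ring
  -- deviation utility of any i ≠ last is ≤ 0
  have hdev : ∀ i : Fin (n+1), i ≠ Fin.last n → ∀ S : Finset (Fin (n+1)),
      val n ε i S - ∑ j ∈ S, maxOther n ε i j ≤ 0 := by
    intro i hi S
    rcases S.eq_empty_or_nonempty with rfl | ⟨j0, hj0⟩
    · simp [hval_empty i hi]
    · have h1 : val n ε i S ≤ 1 - ε := by
        unfold _root_.val; rw [if_neg hi]; split_ifs <;> linarith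
      have h3 : maxOther n ε i j0 ≤ ∑ j ∈ S, maxOther n ε i j :=
        Finset.single_le_sum (fun j _ => hnonneg i j) hj0
      have h4 : 1 - ε ≤ maxOther n ε i j0 := by
        by_cases hj : j0 = Fin.last n
        · rw [hj, hmaxL i hi]
        · rw [hmax1 i j0 hi hj]; linarith
      linarith
  have hvL : val n ε (Fin.last n) (won n (Fin.last n)) = 1 := by
    unfold _root_.val
    rw [if_pos rfl, if_pos ⟨0, by rw [hwonL]; simp [h0L], h0L⟩]
  have hv0 : val n ε 0 (won n 0) = 1 - ε := by
    rw [hwon0]; unfold _root_.val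
    rw [if_neg h0L, if_pos (Or.inr (Finset.mem_singleton_self _))]
  refine ⟨?_, ?_, ?_⟩
  · -- Nash equilibrium
    intro i c
    by_cases hi : i = Fin.last n
    · subst hi
      have hsum0 : ∑ j ∈ won n (Fin.last n), maxOther n ε (Fin.last n) j = 0 := by
        apply Finset.sum_eq_zero
        intro j hj
        rw [hwonL] at hj
        exact hmaxLa j (Finset.mem_filter.mp hj).2
      rw [hvL, hsum0]
      have hb1 : val n ε (Fin.last n)
          (Finset.univ.filter fun j => maxOther n ε (Fin.last n) j ≤ c j) ≤ 1 := by
        unfold _root_.val; split_ifs <;> linarith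
      have hs0 : 0 ≤ ∑ j ∈ Finset.univ.filter (fun j => maxOther n ε (Fin.last n) j ≤ c j),
          maxOther n ε (Fin.last n) j :=
        Finset.sum_nonneg fun j _ => hnonneg _ j
      linarith
    · rw [hRHS i hi]
      exact hdev i hi _
  · -- welfare
    rw [← Finset.add_sum_erase _ _ (Finset.mem_univ (Fin.last n))]
    have h0mem : (0 : Fin (n+1)) ∈ Finset.univ.erase (Fin.last n) :=
      Finset.mem_erase.mpr ⟨h0L, Finset.mem_univ _⟩
    rw [← Finset.add_sum_erase _ _ h0mem]
    have hrest : ∑ k ∈ (Finset.univ.erase (Fin.last n)).erase 0, val n ε k (won n k) = 0 := by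
      apply Finset.sum_eq_zero
      intro k hk
      have hk0 : k ≠ 0 := (Finset.mem_erase.mp hk).1
      have hkL : k ≠ Fin.last n := (Finset.mem_erase.mp (Finset.mem_erase.mp hk).2).1
      rw [hwoni k hk0 hkL, hval_empty k hkL]
    rw [hrest, hvL, hv0]; ring
  · -- optimal allocation
    refine ⟨fun i => {Equiv.swap (0 : Fin (n+1)) (Fin.last n) i}, ?_, ?_⟩
    · intro i k h
      rw [Finset.disjoint_singleton]
      exact (Equiv.injective _).ne h
    · rw [← Finset.add_sum_erase _ _ (Finset.mem_univ (Fin.last n))]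
      have hlast : val n ε (Fin.last n)
          ({Equiv.swap (0 : Fin (n+1)) (Fin.last n) (Fin.last n)} : Finset (Fin (n+1))) = 1 := by
        rw [Equiv.swap_apply_right]
        unfold _root_.val
        rw [if_pos rfl, if_pos ⟨0, Finset.mem_singleton_self _, h0L⟩]
      have hother : ∀ i ∈ Finset.univ.erase (Fin.last n),
          val n ε i ({Equiv.swap (0 : Fin (n+1)) (Fin.last n) i} : Finset (Fin (n+1)))
            = 1 - ε := by
        intro i hi
        have hiL : i ≠ Fin.last n := (Finset.mem_erase.mp hi).1
        unfold _root_.val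
        rw [if_neg hiL, if_pos ?_]
        by_cases h0 : i = 0
        · subst h0; rw [Equiv.swap_apply_left]
          exact Or.inr (Finset.mem_singleton_self _)
        · rw [Equiv.swap_apply_of_ne_of_ne h0 hiL]
          exact Or.inl (Finset.mem_singleton_self _)
      rw [Finset.sum_congr rfl hother, Finset.sum_const]
      simp only [Finset.card_erase_of_mem (Finset.mem_univ _), Finset.card_univ,
        Fintype.card_fin, Nat.add_sub_cancel, nsmul_eq_mul, hlast]
      ring
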